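/- Let α, β > -1 with α, β ≤ -1/p + 1/2 where p ∈ E(α,β), and let g(θ) = sign(θ)|sin(θ/2)|^{α+3/2}(cos(θ/2))^{β+3/2}. Then on (0,π) the composition D_{α+1,β+1}D*_{α,β} applied to g⁺(θ) = (sin(θ/2))^{α+3/2}(cos(θ/2))^{β+3/2} satisfies the lower bound D_{α+1,β+1}D*_{α,β}g⁺(θ) ≳ θ^{α-1/2}(π-θ)^{β-1/2} for θ ∈ (0,π), and consequently D_{α+1,β+1}D*_{α,β}g⁺ ∉ L^p(0,π). -/

import Mathlib

open MeasureTheory Set Real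
open scoped ENNReal NNReal

/-- The upper endpoint `p(α,β)` of the interval `E(α,β)`. -/
noncomputable def pMaxJ (α β : ℝ) : ℝ≥0∞ :=
  if -(1 / 2 : ℝ) ≤ α ∧ -(1 / 2 : ℝ) ≤ β then ⊤
  else ENNReal.ofReal (-1 / min (α + 1 / 2) (β + 1 / 2))

/-- The lower endpoint `p'(α,β)` (conjugate exponent of `p(α,β)`). -/
noncomputable def pMinJ (α β : ℝ) : ℝ :=
  if -(1 / 2 : ℝ) ≤ α ∧ -(1 / 2 : ℝ) ≤ β then 1
  else (pMaxJ α β).toReal / ((pMaxJ α β).toReal - 1)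

/-- `p ∈ E(α,β) = (p'(α,β), p(α,β))`. -/
def memEJ (α β p : ℝ) : Prop := pMinJ α β < p ∧ ENNReal.ofReal p < pMaxJ α β

/-- The Jacobi derivative `D_{a,b}h(θ) = h'(θ) - ((2a+1)/4)cot(θ/2)h(θ) + ((2b+1)/4)tan(θ/2)h(θ)`. -/
noncomputable def jacobiD (a b : ℝ) (h : ℝ → ℝ) (θ : ℝ) : ℝ :=
  deriv h θ - (2 * a + 1) / 4 * (Real.cos (θ / 2) / Real.sin (θ / 2)) * h θ
    + (2 * b + 1) / 4 * Real.tan (θ / 2) * h θ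

/-- The adjoint Jacobi derivative
`D*_{a,b}h(θ) = -h'(θ) - ((2a+1)/4)cot(θ/2)h(θ) + ((2b+1)/4)tan(θ/2)h(θ)`. -/
noncomputable def jacobiDStar (a b : ℝ) (h : ℝ → ℝ) (θ : ℝ) : ℝ :=
  -deriv h θ - (2 * a + 1) / 4 * (Real.cos (θ / 2) / Real.sin (θ / 2)) * h θ
    + (2 * b + 1) / 4 * Real.tan (θ / 2) * h θ

lemma hasDerivAt_SC (m n θ : ℝ) (hs : Real.sin (θ/2) ≠ 0) (hc : Real.cos (θ/2) ≠ 0) :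
    HasDerivAt (fun t => Real.sin (t/2) ^ m * Real.cos (t/2) ^ n)
      ((m * Real.sin (θ/2) ^ (m-1) * (Real.cos (θ/2) * (1/2))) * Real.cos (θ/2) ^ n
        + Real.sin (θ/2) ^ m * (n * Real.cos (θ/2) ^ (n-1) * (-Real.sin (θ/2) * (1/2)))) θ := by
  have h1 : HasDerivAt (fun t : ℝ => t/2) (1/2) θ := (hasDerivAt_id θ).div_const 2
  have h2 := ((h1.sin).rpow_const (p := m) (Or.inl hs)).mul
    ((h1.cos).rpow_const (p := n) (Or.inl hc))
  refine HasDerivAt.congr_deriv h2 ?_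
  ring

lemma rpow_shift {s : ℝ} (hs : 0 < s) {y x : ℝ} (k : ℕ) (h : y = x + k) :
    s ^ y = s ^ x * s ^ k := by
  subst h; rw [← Real.rpow_natCast s k, ← Real.rpow_add hs]

lemma sc_pos {θ : ℝ} (h0 : 0 < θ) (hπ : θ < π) :
    0 < Real.sin (θ/2) ∧ 0 < Real.cos (θ/2) :=
  ⟨Real.sin_pos_of_pos_of_lt_pi (by linarith) (by linarith [Real.pi_pos]),
   Real.cos_pos_of_mem_Ioo ⟨by linarith [Real.pi_pos], by linarith⟩⟩

lemma dstar_eq (α β : ℝ) {θ : ℝ} (h0 : 0 < θ) (hπ : θ < π) :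
    jacobiDStar α β (fun t => Real.sin (t/2) ^ (α + 3/2) * Real.cos (t/2) ^ (β + 3/2)) θ
      = (-(α+1)) * (Real.sin (θ/2) ^ (α + 1/2) * Real.cos (θ/2) ^ (β + 5/2))
        + (β+1) * (Real.sin (θ/2) ^ (α + 5/2) * Real.cos (θ/2) ^ (β + 1/2)) := by
  obtain ⟨hs, hc⟩ := sc_pos h0 hπ
  have hd := (hasDerivAt_SC (α + 3/2) (β + 3/2) θ hs.ne' hc.ne').deriv
  rw [jacobiDStar, hd, Real.tan_eq_sin_div_cos]
  rw [rpow_shift hs 2 (show α + 3/2 = (α - 1/2) + (2:ℕ) by push_cast; ring),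
      rpow_shift hs 1 (show α + 3/2 - 1 = (α - 1/2) + (1:ℕ) by push_cast; ring),
      rpow_shift hs 1 (show α + 1/2 = (α - 1/2) + (1:ℕ) by push_cast; ring),
      rpow_shift hs 3 (show α + 5/2 = (α - 1/2) + (3:ℕ) by push_cast; ring),
      rpow_shift hc 2 (show β + 3/2 = (β - 1/2) + (2:ℕ) by push_cast; ring),
      rpow_shift hc 1 (show β + 3/2 - 1 = (β - 1/2) + (1:ℕ) by push_cast; ring),
      rpow_shift hc 1 (show β + 1/2 = (β - 1/2) + (1:ℕ) by push_cast; ring),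
      rpow_shift hc 3 (show β + 5/2 = (β - 1/2) + (3:ℕ) by push_cast; ring)]
  field_simp
  ring

lemma key_eq (α β : ℝ) {θ : ℝ} (h0 : 0 < θ) (hπ : θ < π) :
    jacobiD (α+1) (β+1)
        (jacobiDStar α β (fun t => Real.sin (t/2) ^ (α + 3/2) * Real.cos (t/2) ^ (β + 3/2))) θ
      = 1/2 * ((α+1) * Real.cos (θ/2)^2 + (β+1) * Real.sin (θ/2)^2)
          * (Real.sin (θ/2) ^ (α - 1/2) * Real.cos (θ/2) ^ (β - 1/2)) := by
  obtain ⟨hs, hc⟩ := sc_pos h0 hπ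
  set f1 : ℝ → ℝ := fun t => (-(α+1)) * (Real.sin (t/2) ^ (α + 1/2) * Real.cos (t/2) ^ (β + 5/2))
        + (β+1) * (Real.sin (t/2) ^ (α + 5/2) * Real.cos (t/2) ^ (β + 1/2)) with hf1
  have hev : deriv (jacobiDStar α β
      (fun t => Real.sin (t/2) ^ (α + 3/2) * Real.cos (t/2) ^ (β + 3/2))) θ = deriv f1 θ := by
    apply Filter.EventuallyEq.deriv_eq
    filter_upwards [Ioo_mem_nhds h0 hπ] with t ht
    exact dstar_eq α β ht.1 ht.2
  have hD : HasDerivAt f1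
      ((-(α+1)) * (((α + 1/2) * Real.sin (θ/2) ^ ((α + 1/2)-1) * (Real.cos (θ/2) * (1/2))) * Real.cos (θ/2) ^ (β + 5/2)
        + Real.sin (θ/2) ^ (α + 1/2) * ((β + 5/2) * Real.cos (θ/2) ^ ((β + 5/2)-1) * (-Real.sin (θ/2) * (1/2))))
      + (β+1) * (((α + 5/2) * Real.sin (θ/2) ^ ((α + 5/2)-1) * (Real.cos (θ/2) * (1/2))) * Real.cos (θ/2) ^ (β + 1/2)
        + Real.sin (θ/2) ^ (α + 5/2) * ((β + 1/2) * Real.cos (θ/2) ^ ((β + 1/2)-1) * (-Real.sin (θ/2) * (1/2))))) θ :=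
    ((hasDerivAt_SC (α + 1/2) (β + 5/2) θ hs.ne' hc.ne').const_mul _).add
      ((hasDerivAt_SC (α + 5/2) (β + 1/2) θ hs.ne' hc.ne').const_mul _)
  rw [jacobiD, hev, hD.deriv, dstar_eq α β h0 hπ, Real.tan_eq_sin_div_cos]
  rw [rpow_shift hs 1 (show α + 1/2 = (α - 1/2) + (1:ℕ) by push_cast; ring),
      rpow_shift hs 0 (show α + 1/2 - 1 = (α - 1/2) + (0:ℕ) by push_cast; ring),
      rpow_shift hs 3 (show α + 5/2 = (α - 1/2) + (3:ℕ) by push_cast; ring),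
      rpow_shift hs 2 (show α + 5/2 - 1 = (α - 1/2) + (2:ℕ) by push_cast; ring),
      rpow_shift hc 1 (show β + 1/2 = (β - 1/2) + (1:ℕ) by push_cast; ring),
      rpow_shift hc 0 (show β + 1/2 - 1 = (β - 1/2) + (0:ℕ) by push_cast; ring),
      rpow_shift hc 3 (show β + 5/2 = (β - 1/2) + (3:ℕ) by push_cast; ring),
      rpow_shift hc 2 (show β + 5/2 - 1 = (β - 1/2) + (2:ℕ) by push_cast; ring)]
  have hpy : Real.sin (θ/2)^2 + Real.cos (θ/2)^2 = 1 := Real.sin_sq_add_cos_sq _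
  set S := Real.sin (θ/2) ^ (α - 1/2)
  set C := Real.cos (θ/2) ^ (β - 1/2)
  field_simp
  linear_combination (8 * S * C
    * ((α+1) * Real.cos (θ/2)^2 + (β+1) * Real.sin (θ/2)^2)) * hpy

lemma one_lt_of_memEJ {α β p : ℝ} (hα : -1 < α) (hβ : -1 < β) (hp : memEJ α β p) : 1 < p := by
  rcases hp with ⟨h1, _⟩
  by_cases hcase : -(1 / 2 : ℝ) ≤ α ∧ -(1 / 2 : ℝ) ≤ β
  · rw [pMinJ, if_pos hcase] at h1; exact h1
  · rw [pMinJ, if_neg hcase, pMaxJ, if_neg hcase] at h1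
    set m := min (α + 1 / 2) (β + 1 / 2) with hm
    have hm0 : m < 0 := by
      push_neg at hcase
      rcases le_or_gt (-(1/2:ℝ)) α with h | h
      · exact lt_of_le_of_lt (min_le_right _ _) (by linarith [hcase h])
      · exact lt_of_le_of_lt (min_le_left _ _) (by linarith)
    have hmgt : -(1/2:ℝ) < m := lt_min (by linarith) (by linarith)
    have ht2 : 2 < -1 / m := by
      rw [lt_div_iff_of_neg hm0]; linarith
    rw [ENNReal.toReal_ofReal (by linarith : (0:ℝ) ≤ -1 / m)] at h1
    have hgt1 : 1 < -1 / m / (-1 / m - 1) := by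
      rw [lt_div_iff₀ (by linarith)]; linarith
    linarith

/-- Let `α, β > -1` with `α, β ≤ -1/p + 1/2` and `p ∈ E(α,β)`, and let
`g⁺(θ) = (sin(θ/2))^{α+3/2}(cos(θ/2))^{β+3/2}` on `(0,π)`.  Then
`D_{α+1,β+1}D*_{α,β}g⁺(θ) ≳ θ^{α-1/2}(π-θ)^{β-1/2}` on `(0,π)`, and consequently
`D_{α+1,β+1}D*_{α,β}g⁺ ∉ L^p(0,π)`. -/
theorem stmt19 (α β p : ℝ) (hα : -1 < α) (hβ : -1 < β)
    (hαp : α ≤ -1 / p + 1 / 2) (hβp : β ≤ -1 / p + 1 / 2) (hp : memEJ α β p)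
    (g : ℝ → ℝ)
    (hg : g = fun θ => Real.sin (θ / 2) ^ (α + 3 / 2) * Real.cos (θ / 2) ^ (β + 3 / 2)) :
    (∃ c : ℝ, 0 < c ∧ ∀ θ ∈ Ioo (0 : ℝ) π,
      c * (θ ^ (α - 1 / 2) * (π - θ) ^ (β - 1 / 2))
        ≤ jacobiD (α + 1) (β + 1) (jacobiDStar α β g) θ)
    ∧ ¬ MemLp (jacobiD (α + 1) (β + 1) (jacobiDStar α β g))
        (ENNReal.ofReal p) (volume.restrict (Ioo (0 : ℝ) π)) := by
  subst hg
  have hp1 : 1 < p := one_lt_of_memEJ hα hβ hp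
  have hp0 : 0 < p := by linarith
  have hinvp : 0 < 1 / p := by positivity
  have hαneg : α - 1 / 2 ≤ 0 := by
    have : -1/p < 0 := by rw [div_neg_iff]; right; constructor <;> linarith
    linarith
  have hβneg : β - 1 / 2 ≤ 0 := by
    have : -1/p < 0 := by rw [div_neg_iff]; right; constructor <;> linarith
    linarith
  set c₀ : ℝ := min (α + 1) (β + 1) / 2 with hc₀
  have hc₀pos : 0 < c₀ := by
    have : 0 < min (α + 1) (β + 1) := lt_min (by linarith) (by linarith)
    positivity
  have hbound : ∀ θ ∈ Ioo (0 : ℝ) π,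
      c₀ * (θ ^ (α - 1 / 2) * (π - θ) ^ (β - 1 / 2))
        ≤ jacobiD (α + 1) (β + 1)
          (jacobiDStar α β fun θ => Real.sin (θ / 2) ^ (α + 3 / 2) * Real.cos (θ / 2) ^ (β + 3 / 2)) θ := by
    intro θ hθ
    obtain ⟨h0, hπ'⟩ := hθ
    obtain ⟨hs, hc⟩ := sc_pos h0 hπ'
    rw [key_eq α β h0 hπ']
    have hsθ : Real.sin (θ/2) ≤ θ := le_trans (Real.sin_lt (by linarith)).le (by linarith)
    have hcθ : Real.cos (θ/2) ≤ π - θ := by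
      have h1 : Real.cos (θ/2) = Real.sin ((π - θ)/2) := by
        rw [← Real.sin_pi_div_two_sub]; ring_nf
      rw [h1]
      exact le_trans (Real.sin_lt (by linarith)).le (by linarith)
    have hS : θ ^ (α - 1/2) ≤ Real.sin (θ/2) ^ (α - 1/2) :=
      Real.rpow_le_rpow_of_nonpos hs hsθ hαneg
    have hC : (π - θ) ^ (β - 1/2) ≤ Real.cos (θ/2) ^ (β - 1/2) :=
      Real.rpow_le_rpow_of_nonpos hc hcθ hβneg
    have hstep1 : θ ^ (α - 1/2) * (π - θ) ^ (β - 1/2)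
        ≤ Real.sin (θ/2) ^ (α - 1/2) * Real.cos (θ/2) ^ (β - 1/2) :=
      mul_le_mul hS hC (Real.rpow_nonneg (by linarith) _) (Real.rpow_nonneg hs.le _)
    have hstep2 : min (α + 1) (β + 1)
        ≤ (α+1) * Real.cos (θ/2)^2 + (β+1) * Real.sin (θ/2)^2 := by
      have hpy : Real.sin (θ/2)^2 + Real.cos (θ/2)^2 = 1 := Real.sin_sq_add_cos_sq _
      have h1 : min (α + 1) (β + 1) ≤ α + 1 := min_le_left _ _
      have h2 : min (α + 1) (β + 1) ≤ β + 1 := min_le_right _ _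
      nlinarith [sq_nonneg (Real.sin (θ/2)), sq_nonneg (Real.cos (θ/2))]
    calc c₀ * (θ ^ (α - 1/2) * (π - θ) ^ (β - 1/2))
        ≤ c₀ * (Real.sin (θ/2) ^ (α - 1/2) * Real.cos (θ/2) ^ (β - 1/2)) :=
          mul_le_mul_of_nonneg_left hstep1 hc₀pos.le
      _ ≤ 1/2 * ((α+1) * Real.cos (θ/2)^2 + (β+1) * Real.sin (θ/2)^2)
            * (Real.sin (θ/2) ^ (α - 1/2) * Real.cos (θ/2) ^ (β - 1/2)) := by
          apply mul_le_mul_of_nonneg_right _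
            (mul_nonneg (Real.rpow_nonneg hs.le _) (Real.rpow_nonneg hc.le _))
          rw [hc₀]; linarith
  refine ⟨⟨c₀, hc₀pos, hbound⟩, ?_⟩
  intro Hmem
  set F := jacobiD (α + 1) (β + 1)
    (jacobiDStar α β fun θ => Real.sin (θ / 2) ^ (α + 3 / 2) * Real.cos (θ / 2) ^ (β + 3 / 2)) with hF
  have hpne0 : ENNReal.ofReal p ≠ 0 := by
    simp only [ne_eq, ENNReal.ofReal_eq_zero, not_le]; linarith
  have hint := Hmem.integrable_norm_rpow hpne0 ENNReal.ofReal_ne_top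
  rw [ENNReal.toReal_ofReal hp0.le] at hint
  set G : ℝ → ℝ := fun θ => (c₀ * (θ ^ (α - 1/2) * (π - θ) ^ (β - 1/2))) ^ p with hG
  have hGmeas : Measurable G :=
    ((((measurable_id.pow measurable_const).mul
      ((measurable_const.sub measurable_id).pow measurable_const)).const_mul
        c₀).pow measurable_const)
  have hGint : Integrable G (volume.restrict (Ioo (0 : ℝ) π)) := by
    apply hint.mono hGmeas.aestronglyMeasurable
    rw [ae_restrict_iff' measurableSet_Ioo]
    filter_upwards with θ hθ
    have hbase : 0 ≤ c₀ * (θ ^ (α - 1/2) * (π - θ) ^ (β - 1/2)) := by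
      have h1 : (0:ℝ) ≤ θ := hθ.1.le
      have h2 : (0:ℝ) ≤ π - θ := by linarith [hθ.2]
      positivity
    have h3 : G θ ≤ ‖F θ‖ ^ p := by
      apply Real.rpow_le_rpow hbase _ hp0.le
      exact le_trans (hbound θ hθ) (le_abs_self _)
    have hGθ : G θ = (c₀ * (θ ^ (α - 1/2) * (π - θ) ^ (β - 1/2))) ^ p := rfl
    rw [Real.norm_eq_abs, Real.norm_eq_abs, hGθ, abs_of_nonneg (Real.rpow_nonneg hbase p),
      abs_of_nonneg (Real.rpow_nonneg (norm_nonneg (F θ)) p)]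
    exact h3
  have hsub : Ioo (0:ℝ) 1 ⊆ Ioo (0:ℝ) π := Ioo_subset_Ioo le_rfl (by linarith [Real.pi_gt_three])
  have hGintOn : IntegrableOn G (Ioo (0:ℝ) π) := hGint
  have hGint1 : IntegrableOn G (Ioo (0:ℝ) 1) := hGintOn.mono_set hsub
  set K : ℝ := c₀ ^ p * π ^ ((β - 1/2) * p) with hK
  have hKpos : 0 < K := by
    have := Real.pi_pos
    positivity
  have hint2 : IntegrableOn (fun θ => K * θ ^ ((α - 1/2) * p)) (Ioo (0:ℝ) 1) := by
    apply Integrable.mono hGint1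
      (((measurable_id.pow measurable_const).const_mul K).aestronglyMeasurable)
    rw [ae_restrict_iff' measurableSet_Ioo]
    filter_upwards with θ hθ
    simp only [id_eq]
    obtain ⟨h0, h1⟩ := hθ
    have hπθ : 0 < π - θ := by linarith [Real.pi_gt_three]
    have hGval : G θ = c₀ ^ p * (θ ^ ((α - 1/2) * p) * (π - θ) ^ ((β - 1/2) * p)) := by
      have hGθ : G θ = (c₀ * (θ ^ (α - 1/2) * (π - θ) ^ (β - 1/2))) ^ p := rfl
      rw [hGθ]
      rw [Real.mul_rpow hc₀pos.le (mul_nonneg (Real.rpow_nonneg h0.le _) (Real.rpow_nonneg hπθ.le _)),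
        Real.mul_rpow (Real.rpow_nonneg h0.le _) (Real.rpow_nonneg hπθ.le _),
        ← Real.rpow_mul h0.le, ← Real.rpow_mul hπθ.le]
    have hπbd : π ^ ((β - 1/2) * p) ≤ (π - θ) ^ ((β - 1/2) * p) := by
      apply Real.rpow_le_rpow_of_nonpos hπθ (by linarith)
      exact mul_nonpos_of_nonpos_of_nonneg hβneg hp0.le
    have hnorm1 : ‖K * θ ^ ((α - 1/2) * p)‖ = K * θ ^ ((α - 1/2) * p) := by
      rw [Real.norm_eq_abs, abs_of_nonneg (mul_nonneg hKpos.le (Real.rpow_nonneg h0.le _))]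
    have hnorm2 : ‖G θ‖ = G θ := by
      rw [Real.norm_eq_abs, abs_of_nonneg]
      rw [hGval]
      positivity
    rw [hnorm1, hnorm2, hGval, hK]
    calc c₀ ^ p * π ^ ((β - 1/2) * p) * θ ^ ((α - 1/2) * p)
        ≤ c₀ ^ p * ((π - θ) ^ ((β - 1/2) * p) * θ ^ ((α - 1/2) * p)) := by
          rw [← mul_assoc]
          apply mul_le_mul_of_nonneg_right _ (Real.rpow_nonneg h0.le _)
          exact mul_le_mul_of_nonneg_left hπbd (Real.rpow_nonneg hc₀pos.le _)
      _ = c₀ ^ p * (θ ^ ((α - 1/2) * p) * (π - θ) ^ ((β - 1/2) * p)) := by ring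
  have hint3 : IntegrableOn (fun θ => θ ^ ((α - 1/2) * p)) (Ioo (0:ℝ) 1) := by
    have := hint2.const_mul K⁻¹
    simpa [IntegrableOn, ← mul_assoc, inv_mul_cancel₀ hKpos.ne'] using this
  have hlt := (intervalIntegral.integrableOn_Ioo_rpow_iff one_pos).mp hint3
  have hle : (α - 1/2) * p ≤ -1 := by
    have h1 : α - 1/2 ≤ -1/p := by linarith
    have h2 : (α - 1/2) * p ≤ (-1/p) * p := mul_le_mul_of_nonneg_right h1 hp0.le
    have h3 : (-1/p) * p = -1 := by field_simp
    linarith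
  linarith
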